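/- If T is a finite tree that is not a path, then the partition dimension of T is at most the number of leaves of T minus the number of exterior major vertices of T plus one, i.e., pd(T) ≤ n₁(T) − ex(T) + 1. -/

import Mathlib

open SimpleGraph

variable {V : Type*}

/-- Distance from a vertex to a set of vertices: `min_{u ∈ P} d(v,u)`. -/
noncomputable def distSet (G : SimpleGraph V) (v : V) (P : Set V) : ℕ :=
  sInf ((G.dist v) '' P)

/-- An ordered partition of `V` into `t` (nonempty) classes, encoded by a surjective
map `c : V → Fin t`, is resolving if distinct vertices have distinct partition
representations, i.e. distinct vectors of distances to the classes. -/
def IsResolvingPartition (G : SimpleGraph V) {t : ℕ} (c : V → Fin t) : Prop :=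
  Function.Surjective c ∧
    ∀ u v : V, (∀ i : Fin t, distSet G u {x | c x = i} = distSet G v {x | c x = i}) → u = v

/-- The partition dimension: the least `t` admitting a resolving partition into `t` classes. -/
noncomputable def partitionDim (G : SimpleGraph V) : ℕ :=
  sInf {t : ℕ | ∃ c : V → Fin t, IsResolvingPartition G c}

/-- A set `S` is a resolving set if distinct vertices have distinct vectors of
distances to the elements of `S`. -/
def IsResolvingSet (G : SimpleGraph V) (S : Set V) : Prop :=
  ∀ u v : V, (∀ w ∈ S, G.dist u w = G.dist v w) → u = v

/-- The metric dimension: the least cardinality of a resolving set. -/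
noncomputable def metricDim (G : SimpleGraph V) : ℕ :=
  sInf {k : ℕ | ∃ S : Set V, S.ncard = k ∧ IsResolvingSet G S}

/-- A leaf is a vertex of degree one. -/
def IsLeaf (G : SimpleGraph V) (v : V) : Prop := (G.neighborSet v).ncard = 1

/-- A major vertex is a vertex of degree at least three. -/
def IsMajor (G : SimpleGraph V) (v : V) : Prop := 3 ≤ (G.neighborSet v).ncard

/-- A path graph: a tree in which every vertex has degree at most two. -/
def IsPathGraph (G : SimpleGraph V) : Prop :=
  G.IsTree ∧ ∀ v : V, (G.neighborSet v).ncard ≤ 2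

/-- `u` is a terminal vertex of the major vertex `v` if `u` is a leaf and
`d(u,v) < d(u,w)` for every other major vertex `w`. -/
def IsTerminalOf (G : SimpleGraph V) (u v : V) : Prop :=
  IsLeaf G u ∧ IsMajor G v ∧ ∀ w : V, IsMajor G w → w ≠ v → G.dist u v < G.dist u w

/-- The terminal degree of a vertex: its number of terminal vertices. -/
noncomputable def terminalDegree (G : SimpleGraph V) (v : V) : ℕ :=
  {u | IsTerminalOf G u v}.ncard

/-- An exterior major vertex: a major vertex with positive terminal degree. -/
def IsExteriorMajor (G : SimpleGraph V) (v : V) : Prop :=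
  IsMajor G v ∧ 0 < terminalDegree G v

/-- `n₁(G)`: the number of leaves. -/
noncomputable def numLeaves (G : SimpleGraph V) : ℕ := {v | IsLeaf G v}.ncard

/-- `ex(G)`: the number of exterior major vertices. -/
noncomputable def numExteriorMajor (G : SimpleGraph V) : ℕ := {v | IsExteriorMajor G v}.ncard

/-- A support vertex: a vertex adjacent to a leaf. -/
def IsSupport (G : SimpleGraph V) (v : V) : Prop := ∃ u, G.Adj v u ∧ IsLeaf G u

/-- `ξ(G)`: the number of support vertices. -/
noncomputable def numSupport (G : SimpleGraph V) : ℕ := {v | IsSupport G v}.ncard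

/-- `θ(G)`: the maximum number of leaves adjacent to a single support vertex. -/
noncomputable def maxLeavesAtSupport (G : SimpleGraph V) : ℕ :=
  sSup {n : ℕ | ∃ v, IsSupport G v ∧ n = {u | G.Adj v u ∧ IsLeaf G u}.ncard}


namespace TreeAux

variable {V : Type*} {G : SimpleGraph V}

lemma dcomm (G : SimpleGraph V) (x y : V) : G.dist x y = G.dist y x :=
  SimpleGraph.dist_comm



lemma geo_getVert (hc : G.Connected) {u v : V} (p : G.Walk u v)
    (hp : p.length = G.dist u v) : ∀ i, i ≤ p.length →
    G.dist u (p.getVert i) = i ∧ G.dist (p.getVert i) v = p.length - i := by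
  induction p with
  | nil =>
    intro i hi
    simp only [Walk.length_nil, Nat.le_zero] at hi
    subst hi
    simp
  | @cons u x v h q ih =>
    have hxv : q.length = G.dist x v := by
      have h1 : G.dist x v ≤ q.length := SimpleGraph.dist_le q
      have h2 : G.dist u v ≤ G.dist u x + G.dist x v := hc.dist_triangle
      have h3 : G.dist u x = 1 := by
        rw [SimpleGraph.dist_eq_one_iff_adj]; exact h
      simp only [Walk.length_cons] at hp
      omega
    intro i hi
    match i with
    | 0 => simp [Walk.getVert_zero, hp.symm]
    | (i+1) =>
      simp only [Walk.length_cons] at hi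
      obtain ⟨ih1, ih2⟩ := ih hxv i (by omega)
      constructor
      · have hub : G.dist u (q.getVert i) ≤ i + 1 := by
          have := hc.dist_triangle (u := u) (v := x) (w := q.getVert i)
          have h3 : G.dist u x = 1 := by
            rw [SimpleGraph.dist_eq_one_iff_adj]; exact h
          omega
        have hlb : G.dist u v ≤ G.dist u (q.getVert i) + G.dist (q.getVert i) v :=
          hc.dist_triangle
        simp only [Walk.getVert_cons_succ]
        simp only [Walk.length_cons] at hp
        omega
      · simp only [Walk.getVert_cons_succ, Walk.length_cons]
        omega

lemma adj_dist_ne (hc : G.Connected) (ha : G.IsAcyclic) {c y z : V} (h : G.Adj y z) :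
    G.dist c y ≠ G.dist c z := by
  intro heq
  rcases Nat.eq_zero_or_pos (G.dist c z) with h0 | hpos
  · have hy : c = y := (hc.dist_eq_zero_iff).mp (by omega)
    have hz : c = z := (hc.dist_eq_zero_iff).mp h0
    exact h.ne (hy ▸ hz ▸ rfl)
  · obtain ⟨p, hp, hpl⟩ := hc.exists_path_of_dist c y
    obtain ⟨q, hq, hql⟩ := hc.exists_path_of_dist c z
    have hzns : z ∉ p.support := by
      intro hz
      obtain ⟨n, hn, hnl⟩ := Walk.mem_support_iff_exists_getVert.mp hz
      have := (geo_getVert hc p hpl n hnl).2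
      have := (geo_getVert hc p hpl n hnl).1
      have hnz : n ≠ p.length := by
        intro hcon
        rw [hcon, Walk.getVert_length] at hn
        exact h.ne' hn.symm
      rw [hn] at this
      omega
    -- two distinct paths from z to c
    have hr : (Walk.cons h.symm p.reverse).IsPath := by
      apply (hp.reverse).cons
      simpa using hzns
    have hq' : (q.reverse).IsPath := hq.reverse
    have := ha.path_unique ⟨Walk.cons h.symm p.reverse, hr⟩ ⟨q.reverse, hq'⟩
    have hlen := congrArg (fun (w : G.Path z c) => w.1.length) this
    simp only [Walk.length_cons, Walk.length_reverse] at hlen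
    omega

lemma exists_closer (hc : G.Connected) {c z : V} (h : z ≠ c) :
    ∃ y, G.Adj z y ∧ G.dist c y + 1 = G.dist c z := by
  obtain ⟨p, hp, hpl⟩ := hc.exists_path_of_dist c z
  have hpos : 0 < G.dist c z := hc.pos_dist_of_ne (Ne.symm h)
  refine ⟨p.getVert (p.length - 1), ?_, ?_⟩
  · have := p.adj_getVert_succ (i := p.length - 1) (by omega)
    have hlast : p.getVert (p.length - 1 + 1) = z := by
      rw [show p.length - 1 + 1 = p.length by omega, Walk.getVert_length]
    rw [hlast] at this
    exact this.symm
  · have := (geo_getVert hc p hpl (p.length - 1) (by omega)).1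
    omega

lemma closer_unique (hc : G.Connected) (ha : G.IsAcyclic) {c z y₁ y₂ : V}
    (h₁ : G.Adj z y₁) (h₂ : G.Adj z y₂)
    (hd₁ : G.dist c y₁ + 1 = G.dist c z) (hd₂ : G.dist c y₂ + 1 = G.dist c z) :
    y₁ = y₂ := by
  obtain ⟨p₁, hp₁, hpl₁⟩ := hc.exists_path_of_dist c y₁
  obtain ⟨p₂, hp₂, hpl₂⟩ := hc.exists_path_of_dist c y₂
  have key : ∀ (y : V) (p : G.Walk c y), p.IsPath → p.length = G.dist c y →
      G.Adj z y → G.dist c y + 1 = G.dist c z → z ∉ p.support := by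
    intro y p hp hpl hzy hd hz
    obtain ⟨n, hn, hnl⟩ := Walk.mem_support_iff_exists_getVert.mp hz
    have := (geo_getVert hc p hpl n hnl).1
    rw [hn] at this
    omega
  have hr₁ : (Walk.cons h₁ p₁.reverse).IsPath := by
    apply (hp₁.reverse).cons
    simpa using key y₁ p₁ hp₁ hpl₁ h₁ hd₁
  have hr₂ : (Walk.cons h₂ p₂.reverse).IsPath := by
    apply (hp₂.reverse).cons
    simpa using key y₂ p₂ hp₂ hpl₂ h₂ hd₂
  have := ha.path_unique ⟨Walk.cons h₁ p₁.reverse, hr₁⟩ ⟨Walk.cons h₂ p₂.reverse, hr₂⟩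
  have h1 := congrArg (fun (w : G.Path z c) => w.1.getVert 1) this
  simp only [Walk.getVert_cons_succ, Walk.getVert_zero] at h1
  exact h1

lemma valley {h : ℕ → ℕ} {D : ℕ}
    (step : ∀ i < D, h (i+1) = h i + 1 ∨ h i = h (i+1) + 1)
    (nomax : ∀ i, 0 < i → i < D → ¬(h i = h (i-1) + 1 ∧ h i = h (i+1) + 1)) :
    ∃ i₀ ≤ D, (∀ i ≤ i₀, h i = h i₀ + (i₀ - i)) ∧
      (∀ j ≤ D, i₀ ≤ j → h j = h i₀ + (j - i₀)) := by
  have up : ∀ m k, k < D → h (k+1) = h k + 1 → k + m ≤ D → h (k + m) = h k + m := by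
    intro m
    induction m using Nat.strong_induction_on with
    | _ m ih =>
      match m with
      | 0 => intro k _ _ _; simp
      | 1 => intro k _ hup _; simpa using hup
      | (m+2) =>
        intro k hk hup hm
        have ihm : h (k + (m+1)) = h k + (m+1) := ih (m+1) (by omega) k hk hup (by omega)
        have ihm1 : h (k + m) = h k + m := ih m (by omega) k hk hup (by omega)
        rcases step (k+m+1) (by omega) with hu | hd
        · rw [show k + (m+2) = k + m + 1 + 1 by omega, hu,
            show k + m + 1 = k + (m+1) by omega, ihm]
          omega
        · exfalso
          refine nomax (k+m+1) (by omega) (by omega) ⟨?_, ?_⟩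
          · rw [show k + m + 1 - 1 = k + m by omega,
              show k + m + 1 = k + (m+1) by omega, ihm, ihm1]
            omega
          · exact hd
  obtain ⟨i₀, hi₀mem, hi₀min⟩ := Finset.exists_min_image (Finset.range (D+1)) h ⟨0, by simp⟩
  simp only [Finset.mem_range] at hi₀mem
  have hmin : ∀ i ≤ D, h i₀ ≤ h i := fun i hi => hi₀min i (by simp; omega)
  refine ⟨i₀, by omega, ?_, ?_⟩
  · have dec : ∀ i < i₀, h i = h (i+1) + 1 := by
      intro i hi
      rcases step i (by omega) with hu | hd
      · exfalso
        have := up (i₀ - i) i (by omega) hu (by omega)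
        rw [show i + (i₀ - i) = i₀ by omega] at this
        have := hmin i (by omega)
        omega
      · exact hd
    have aux : ∀ m ≤ i₀, h (i₀ - m) = h i₀ + m := by
      intro m
      induction m with
      | zero => simp
      | succ m ih =>
        intro hm
        have h1 := dec (i₀ - (m+1)) (by omega)
        rw [show i₀ - (m+1) + 1 = i₀ - m by omega] at h1
        have := ih (by omega)
        omega
    intro i hi
    have := aux (i₀ - i) (by omega)
    rw [show i₀ - (i₀ - i) = i by omega] at this
    omega
  · intro j hjD hij
    rcases Nat.eq_or_lt_of_le hij with rfl | hlt
    · simp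
    · have hstep : h (i₀ + 1) = h i₀ + 1 := by
        rcases step i₀ (by omega) with hu | hd
        · exact hu
        · have := hmin (i₀+1) (by omega); omega
      have := up (j - i₀) i₀ (by omega) hstep (by omega)
      rw [show i₀ + (j - i₀) = j by omega] at this
      omega



lemma step_parity {h : ℕ → ℕ} {D : ℕ}
    (step : ∀ i < D, h (i+1) = h i + 1 ∨ h i = h (i+1) + 1) :
    ∀ i ≤ D, (h i + i) % 2 = h 0 % 2 := by
  intro i hi
  induction i with
  | zero => simp
  | succ i ih =>
    have := ih (by omega)
    rcases step i (by omega) with hu | hd <;> omega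

lemma adj_dist_cases (hc : G.Connected) (ha : G.IsAcyclic) {y z : V} (h : G.Adj y z) (c : V) :
    G.dist c z = G.dist c y + 1 ∨ G.dist c y = G.dist c z + 1 := by
  have hne := adj_dist_ne hc ha (c := c) h
  have h1 : G.dist c z ≤ G.dist c y + 1 := by
    have := hc.dist_triangle (u := c) (v := y) (w := z)
    have : G.dist y z = 1 := by rw [SimpleGraph.dist_eq_one_iff_adj]; exact h
    omega
  have h2 : G.dist c y ≤ G.dist c z + 1 := by
    have := hc.dist_triangle (u := c) (v := z) (w := y)
    have : G.dist z y = 1 := by rw [SimpleGraph.dist_eq_one_iff_adj]; exact h.symm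
    omega
  omega

/-- In a tree, a median of three vertices exists. -/
lemma median (hc : G.Connected) (ha : G.IsAcyclic) (a b c : V) :
    ∃ m, G.dist a m + G.dist m b = G.dist a b ∧
      G.dist a m + G.dist m c = G.dist a c ∧
      G.dist b m + G.dist m c = G.dist b c := by
  obtain ⟨p, hp, hpl⟩ := hc.exists_path_of_dist a b
  set D := p.length with hD
  have step : ∀ i < D, G.dist c (p.getVert (i+1)) = G.dist c (p.getVert i) + 1 ∨
      G.dist c (p.getVert i) = G.dist c (p.getVert (i+1)) + 1 :=
    fun i hi => adj_dist_cases hc ha (p.adj_getVert_succ hi) c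
  have nomax : ∀ i, 0 < i → i < D →
      ¬(G.dist c (p.getVert i) = G.dist c (p.getVert (i-1)) + 1 ∧
        G.dist c (p.getVert i) = G.dist c (p.getVert (i+1)) + 1) := by
    rintro i hi0 hiD ⟨h1, h2⟩
    have hadj1 : G.Adj (p.getVert i) (p.getVert (i-1)) := by
      have := p.adj_getVert_succ (i := i-1) (by omega)
      rw [show i - 1 + 1 = i by omega] at this
      exact this.symm
    have hadj2 : G.Adj (p.getVert i) (p.getVert (i+1)) := p.adj_getVert_succ (by omega)
    have heq := closer_unique hc ha hadj1 hadj2 h1.symm h2.symm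
    have e1 := (geo_getVert hc p hpl (i-1) (by omega)).1
    have e2 := (geo_getVert hc p hpl (i+1) (by omega)).1
    rw [heq] at e1
    omega
  obtain ⟨i₀, hi₀D, hbef, haft⟩ := valley step nomax
  refine ⟨p.getVert i₀, ?_, ?_, ?_⟩
  · have := geo_getVert hc p hpl i₀ hi₀D
    omega
  · have h0 := hbef 0 (by omega)
    rw [Walk.getVert_zero] at h0
    have h1 := (geo_getVert hc p hpl i₀ hi₀D).1
    have e1 : G.dist a c = G.dist c a := dcomm G _ _
    have e2 : G.dist (p.getVert i₀) c = G.dist c (p.getVert i₀) := dcomm G _ _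
    omega
  · have hDv := haft D (le_refl D) hi₀D
    rw [show p.getVert D = b from Walk.getVert_length p] at hDv
    have h1 := (geo_getVert hc p hpl i₀ hi₀D).2
    have e1 : G.dist b c = G.dist c b := dcomm G _ _
    have e2 : G.dist (p.getVert i₀) c = G.dist c (p.getVert i₀) := dcomm G _ _
    have e3 : G.dist b (p.getVert i₀) = G.dist (p.getVert i₀) b := dcomm G _ _
    omega

/-- Composition of betweenness. -/
lemma btw_comp (hc : G.Connected) {u z v w : V}
    (h1 : G.dist u z + G.dist z v = G.dist u v)
    (h2 : G.dist u v + G.dist v w = G.dist u w) :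
    G.dist u z + G.dist z w = G.dist u w ∧ G.dist z v + G.dist v w = G.dist z w := by
  have t1 : G.dist z w ≤ G.dist z v + G.dist v w := hc.dist_triangle
  have t2 : G.dist u w ≤ G.dist u z + G.dist z w := hc.dist_triangle
  omega

/-- Linearity: two points between `z` and `v` are comparable. -/
lemma btw_linear (hc : G.Connected) (ha : G.IsAcyclic) {z y w v : V}
    (h1 : G.dist z y + G.dist y v = G.dist z v)
    (h2 : G.dist z w + G.dist w v = G.dist z v)
    (hle : G.dist z y ≤ G.dist z w) :
    G.dist z y + G.dist y w = G.dist z w := by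
  obtain ⟨q1, hq1, hql1⟩ := hc.exists_path_of_dist z w
  obtain ⟨q2, hq2, hql2⟩ := hc.exists_path_of_dist w v
  obtain ⟨r1, hr1, hrl1⟩ := hc.exists_path_of_dist z y
  obtain ⟨r2, hr2, hrl2⟩ := hc.exists_path_of_dist y v
  have hplen : (q1.append q2).length = G.dist z v := by
    rw [Walk.length_append]; omega
  have hp : (q1.append q2).IsPath := (q1.append q2).isPath_of_length_eq_dist hplen
  have hrlen : (r1.append r2).length = G.dist z v := by
    rw [Walk.length_append]; omega
  have hr : (r1.append r2).IsPath := (r1.append r2).isPath_of_length_eq_dist hrlen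
  have hequ := ha.path_unique ⟨r1.append r2, hr⟩ ⟨q1.append q2, hp⟩
  have hy : y ∈ (q1.append q2).support := by
    have : y ∈ (r1.append r2).support := by
      rw [Walk.mem_support_append_iff]
      left
      exact Walk.end_mem_support r1
    have hval := congrArg (fun (w : G.Path z v) => w.1.support) hequ
    simp only at hval
    rwa [hval] at this
  obtain ⟨n, hn, hnl⟩ := Walk.mem_support_iff_exists_getVert.mp hy
  have hdzy := (geo_getVert hc (q1.append q2) hplen n hnl).1
  rw [hn] at hdzy
  -- y is getVert n with n = dist z y ≤ dist z w = q1.length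
  have hnq : n ≤ q1.length := by omega
  rw [Walk.getVert_append] at hn
  rcases Nat.lt_or_ge n q1.length with hlt | hge
  · rw [if_pos hlt] at hn
    have := (geo_getVert hc q1 hql1 n (by omega)).2
    rw [hn] at this
    omega
  · have hneq : n = q1.length := by omega
    rw [if_neg (by omega)] at hn
    rw [hneq, Nat.sub_self] at hn
    rw [Walk.getVert_zero] at hn
    have hyw : w = y := hn
    subst hyw
    simp [SimpleGraph.dist_self]

/-! ### Behind sets -/

def behind (G : SimpleGraph V) (w b : V) : Set V := {z | G.dist w z = G.dist b z + 1}

lemma b_mem_behind (h : G.Adj w b) : b ∈ behind G w b := by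
  simp [behind, SimpleGraph.dist_self, SimpleGraph.dist_eq_one_iff_adj.mpr h]

lemma w_not_mem_behind (hc : G.Connected) (h : G.Adj w b) : w ∉ behind G w b := by
  simp [behind, SimpleGraph.dist_self]

lemma not_mem_behind (hc : G.Connected) (ha : G.IsAcyclic) (h : G.Adj w b) {z : V}
    (hz : z ∉ behind G w b) : G.dist b z = G.dist w z + 1 := by
  have hz' : ¬(G.dist w z = G.dist b z + 1) := hz
  have e1 : G.dist z b = G.dist b z := dcomm G _ _
  have e2 : G.dist z w = G.dist w z := dcomm G _ _
  rcases adj_dist_cases hc ha h z with h1 | h1 <;> omega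

lemma behind_crossing (hc : G.Connected) (ha : G.IsAcyclic) (h : G.Adj w b) {y z : V}
    (hy : y ∈ behind G w b) (hz : z ∉ behind G w b) (hyz : G.Adj y z) :
    y = b ∧ z = w := by
  have hy' : G.dist w y = G.dist b y + 1 := hy
  have hz' : G.dist b z = G.dist w z + 1 := not_mem_behind hc ha h hz
  -- distances from b to y,z
  have hb : G.dist b z = G.dist b y + 1 := by
    rcases adj_dist_cases hc ha hyz b with h1 | h1
    · exact h1
    · exfalso
      have h2 : G.dist w y ≤ G.dist w z + 1 := by
        rcases adj_dist_cases hc ha hyz w with h3 | h3 <;> omega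
      omega
  have hby : G.dist b y = G.dist w z := by omega
  rcases Nat.eq_zero_or_pos (G.dist b y) with h0 | hpos
  · constructor
    · exact ((hc.dist_eq_zero_iff).mp h0).symm
    · have : G.dist w z = 0 := by omega
      exact ((hc.dist_eq_zero_iff).mp this).symm
  · exfalso
    -- y and w are both between z and b; apply linearity based at z
    have hzy : G.dist z y + G.dist y b = G.dist z b := by
      have e1 : G.dist z y = 1 := SimpleGraph.dist_eq_one_iff_adj.mpr hyz.symm
      have e2 : G.dist y b = G.dist b y := dcomm G _ _
      have e3 : G.dist z b = G.dist b z := dcomm G _ _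
      omega
    have hzw : G.dist z w + G.dist w b = G.dist z b := by
      have e1 : G.dist w b = 1 := SimpleGraph.dist_eq_one_iff_adj.mpr h
      have e2 : G.dist z w = G.dist w z := dcomm G _ _
      have e3 : G.dist z b = G.dist b z := dcomm G _ _
      omega
    have hle : G.dist z y ≤ G.dist z w := by
      have e1 : G.dist z y = 1 := SimpleGraph.dist_eq_one_iff_adj.mpr hyz.symm
      have e2 : G.dist z w = G.dist w z := dcomm G _ _
      omega
    have hlin := btw_linear hc ha hzy hzw hle
    -- dist y w = dist z w - dist z y = dist b y - 1, but dist w y = dist b y + 1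
    have e1 : G.dist z y = 1 := SimpleGraph.dist_eq_one_iff_adj.mpr hyz.symm
    have e2 : G.dist z w = G.dist w z := dcomm G _ _
    have e3 : G.dist y w = G.dist w y := dcomm G _ _
    omega

lemma behind_enter (hc : G.Connected) (ha : G.IsAcyclic) (h : G.Adj w b) {y z : V}
    (hy : y ∉ behind G w b) (hz : z ∈ behind G w b) :
    G.dist y z = G.dist y b + G.dist b z ∧ G.dist y b = G.dist y w + 1 := by
  classical
  obtain ⟨p, hp, hpl⟩ := hc.exists_path_of_dist y z
  have hex : ∃ n, p.getVert n ∈ behind G w b ∧ n ≤ p.length :=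
    ⟨p.length, by rw [Walk.getVert_length]; exact hz, le_refl _⟩
  haveI : DecidablePred (fun n => p.getVert n ∈ behind G w b ∧ n ≤ p.length) :=
    Classical.decPred _
  obtain ⟨n, ⟨hnmem, hnle⟩, hnmin⟩ := Nat.findX hex
  have hn0 : 0 < n := by
    rcases Nat.eq_zero_or_pos n with rfl | h'
    · rw [Walk.getVert_zero] at hnmem; exact absurd hnmem hy
    · exact h'
  have hprev : p.getVert (n-1) ∉ behind G w b := by
    intro hmem
    exact (hnmin (n-1) (by omega)) ⟨hmem, by omega⟩
  have hadj : G.Adj (p.getVert n) (p.getVert (n-1)) := by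
    have := p.adj_getVert_succ (i := n-1) (by omega)
    rw [show n - 1 + 1 = n by omega] at this
    exact this.symm
  obtain ⟨heb, hew⟩ := behind_crossing hc ha h hnmem hprev hadj
  have g1 := (geo_getVert hc p hpl n hnle).1
  have g2 := (geo_getVert hc p hpl n hnle).2
  have g3 := (geo_getVert hc p hpl (n-1) (by omega)).1
  rw [heb] at g1 g2
  rw [hew] at g3
  constructor
  · omega
  · omega

lemma behind_subset (hc : G.Connected) (ha : G.IsAcyclic) (hwb : G.Adj w b)
    {c : V} (hbc : G.Adj b c) (hcw : c ≠ w) :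
    behind G b c ⊆ behind G w b ∧ b ∉ behind G b c := by
  constructor
  · intro z hzc
    have hwnot : w ∉ behind G b c := by
      intro hmem
      have : G.dist b w = G.dist c w + 1 := hmem
      have e1 : G.dist b w = 1 := SimpleGraph.dist_eq_one_iff_adj.mpr hwb.symm
      have : G.dist c w = 0 := by omega
      exact hcw ((hc.dist_eq_zero_iff).mp this)
    obtain ⟨h1, h2⟩ := behind_enter hc ha hbc hwnot hzc
    have e1 : G.dist w b = 1 := SimpleGraph.dist_eq_one_iff_adj.mpr hwb
    show G.dist w z = G.dist b z + 1
    have hz' : G.dist b z = G.dist c z + 1 := hzc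
    omega
  · intro hmem
    have : G.dist b b = G.dist c b + 1 := hmem
    have e1 : G.dist b b = 0 := SimpleGraph.dist_self
    omega

lemma behind_step (hc : G.Connected) {w b : V} {z : V} (hz : z ∈ behind G w b)
    (hzb : z ≠ b) : ∃ c, G.Adj b c ∧ c ≠ w ∧ z ∈ behind G b c := by
  obtain ⟨c, hbc, hd⟩ := exists_closer hc (c := z) (Ne.symm hzb)
  refine ⟨c, hbc, ?_, ?_⟩
  · intro h'
    have hz' : G.dist w z = G.dist b z + 1 := hz
    rw [h'] at hd
    have e1 : G.dist z w = G.dist w z := dcomm G _ _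
    have e2 : G.dist z b = G.dist b z := dcomm G _ _
    omega
  · show G.dist b z = G.dist c z + 1
    have e1 : G.dist z c = G.dist c z := dcomm G _ _
    have e2 : G.dist z b = G.dist b z := dcomm G _ _
    omega

lemma behind_disjoint (hc : G.Connected) (ha : G.IsAcyclic) {b c c' : V}
    (h1 : G.Adj b c) (h2 : G.Adj b c') (hne : c ≠ c') :
    behind G b c ∩ behind G b c' = ∅ := by
  ext z
  simp only [Set.mem_inter_iff, Set.mem_empty_iff_false, iff_false, not_and]
  intro hz1 hz2
  have e1 : G.dist b z = G.dist c z + 1 := hz1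
  have e2 : G.dist b z = G.dist c' z + 1 := hz2
  have d1 : G.dist z c + 1 = G.dist z b := by
    have := dcomm G z c; have := dcomm G z b; have := dcomm G c z; have := dcomm G b z; omega
  have d2 : G.dist z c' + 1 = G.dist z b := by
    have := dcomm G z c'; have := dcomm G z b; have := dcomm G c' z; have := dcomm G b z; omega
  exact hne (closer_unique hc ha h1 h2 d1 d2)



/-! ### Counting -/

lemma ncard_biUnion_sep {W : Type*} [Fintype W] {H : SimpleGraph W} (K : Finset W)
    (F : W → Set W) (P : W → Prop)
    (hdisj : ∀ c ∈ K, ∀ c' ∈ K, c ≠ c' → F c ∩ F c' = ∅) :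
    {z ∈ ⋃ c ∈ (K : Set W), F c | P z}.ncard = ∑ c ∈ K, {z ∈ F c | P z}.ncard := by
  classical
  induction K using Finset.induction with
  | empty => simp
  | @insert a K' hnotmem ih =>
    have hsplit : {z ∈ ⋃ c ∈ ((insert a K' : Finset W) : Set W), F c | P z}
        = {z ∈ F a | P z} ∪ {z ∈ ⋃ c ∈ (K' : Set W), F c | P z} := by
      ext z
      simp only [Finset.coe_insert, Set.mem_iUnion, Set.mem_sep_iff, Set.mem_union,
        Set.mem_insert_iff, Finset.mem_coe]
      constructor
      · rintro ⟨⟨c, hc, hzc⟩, hP⟩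
        rcases hc with rfl | hc
        · exact Or.inl ⟨hzc, hP⟩
        · exact Or.inr ⟨⟨c, hc, hzc⟩, hP⟩
      · rintro (⟨hz, hP⟩ | ⟨⟨c, hc, hzc⟩, hP⟩)
        · exact ⟨⟨a, Or.inl rfl, hz⟩, hP⟩
        · exact ⟨⟨c, Or.inr hc, hzc⟩, hP⟩
    rw [hsplit, Set.ncard_union_eq ?_ (Set.toFinite _) (Set.toFinite _)]
    · rw [ih (fun c hc c' hc' hne => hdisj c (Finset.mem_insert_of_mem hc)
        c' (Finset.mem_insert_of_mem hc') hne)]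
      rw [Finset.sum_insert hnotmem]
    · rw [Set.disjoint_left]
      rintro z ⟨hza, hPa⟩ ⟨hzU, hPU⟩
      simp only [Set.mem_iUnion, Finset.mem_coe] at hzU
      obtain ⟨c, hc, hzc⟩ := hzU
      have hne : a ≠ c := fun h => hnotmem (h ▸ hc)
      have := hdisj a (Finset.mem_insert_self a K') c (Finset.mem_insert_of_mem hc) hne
      exact absurd (Set.mem_inter hza hzc) (by rw [this]; exact Set.notMem_empty z)

variable [Fintype V]

lemma counting (hc : G.Connected) (ha : G.IsAcyclic) :
    ∀ n : ℕ, ∀ w b : V, G.Adj w b → (behind G w b).ncard ≤ n →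
    {z ∈ behind G w b | IsMajor G z}.ncard + 1 ≤ {z ∈ behind G w b | IsLeaf G z}.ncard := by
  classical
  intro n
  induction n with
  | zero =>
    intro w b hwb hcard
    exfalso
    have : 0 < (behind G w b).ncard :=
      (Set.ncard_pos (Set.toFinite _)).mpr ⟨b, b_mem_behind hwb⟩
    omega
  | succ n ih =>
    intro w b hwb hcard
    by_cases hleaf : IsLeaf G b
    · have hSb : behind G w b = {b} := by
        apply Set.eq_singleton_iff_unique_mem.mpr ⟨b_mem_behind hwb, ?_⟩
        intro z hzS
        by_contra hzb
        obtain ⟨c, hbc, hcw, _⟩ := behind_step hc hzS hzb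
        obtain ⟨x, hx⟩ := Set.ncard_eq_one.mp hleaf
        have hw : w ∈ G.neighborSet b := hwb.symm
        have hcmem : c ∈ G.neighborSet b := hbc
        rw [hx] at hw hcmem
        simp only [Set.mem_singleton_iff] at hw hcmem
        exact hcw (hcmem.trans hw.symm)
      rw [hSb]
      have hM : {z ∈ ({b} : Set V) | IsMajor G z} = ∅ := by
        ext z
        simp only [Set.mem_empty_iff_false, iff_false]
        rintro ⟨rfl, hMaj⟩
        unfold IsMajor at hMaj
        unfold IsLeaf at hleaf
        omega
      have hL : {z ∈ ({b} : Set V) | IsLeaf G z} = {b} := by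
        ext z
        simp only [Set.mem_sep_iff, Set.mem_singleton_iff]
        exact ⟨fun h => h.1, fun h => ⟨h, h ▸ hleaf⟩⟩
      rw [hM, hL]
      simp
    · -- decompose into children
      set Kset : Set V := {c | G.Adj b c ∧ c ≠ w} with hKset
      set K : Finset V := Set.toFinset Kset with hK
      have hKmem : ∀ c, c ∈ K ↔ (G.Adj b c ∧ c ≠ w) := by
        intro c; rw [hK, Set.mem_toFinset, hKset]; rfl
      have hdecomp : behind G w b = insert b (⋃ c ∈ (K : Set V), behind G b c) := by
        ext z
        simp only [Set.mem_insert_iff, Set.mem_iUnion, Finset.mem_coe]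
        constructor
        · intro hz
          by_cases hzb : z = b
          · exact Or.inl hzb
          · obtain ⟨c, hbc, hcw, hzc⟩ := behind_step hc hz hzb
            exact Or.inr ⟨c, (hKmem c).mpr ⟨hbc, hcw⟩, hzc⟩
        · rintro (rfl | ⟨c, hcK, hzc⟩)
          · exact b_mem_behind hwb
          · obtain ⟨hbc, hcw⟩ := (hKmem c).mp hcK
            exact (behind_subset hc ha hwb hbc hcw).1 hzc
      have hbnot : b ∉ ⋃ c ∈ (K : Set V), behind G b c := by
        simp only [Set.mem_iUnion, Finset.mem_coe, not_exists]
        intro c hcK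
        obtain ⟨hbc, hcw⟩ := (hKmem c).mp hcK
        exact (behind_subset hc ha hwb hbc hcw).2
      have hdisj : ∀ c ∈ K, ∀ c' ∈ K, c ≠ c' → behind G b c ∩ behind G b c' = ∅ := by
        intro c hcK c' hcK' hne
        exact behind_disjoint hc ha ((hKmem c).mp hcK).1 ((hKmem c').mp hcK').1 hne
      -- child inequality
      have hchild : ∀ c ∈ K, {z ∈ behind G b c | IsMajor G z}.ncard + 1 ≤
          {z ∈ behind G b c | IsLeaf G z}.ncard := by
        intro c hcK
        obtain ⟨hbc, hcw⟩ := (hKmem c).mp hcK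
        apply ih b c hbc
        have hsub : behind G b c ⊆ behind G w b \ {b} := by
          intro z hz
          exact ⟨(behind_subset hc ha hwb hbc hcw).1 hz,
            fun h => (behind_subset hc ha hwb hbc hcw).2 (h ▸ hz)⟩
        have h1 : (behind G b c).ncard ≤ (behind G w b \ {b}).ncard :=
          Set.ncard_le_ncard hsub (Set.toFinite _)
        have h2 : (behind G w b \ {b}).ncard = (behind G w b).ncard - 1 :=
          Set.ncard_diff_singleton_of_mem (b_mem_behind hwb)
        have h3 : 0 < (behind G w b).ncard :=
          (Set.ncard_pos (Set.toFinite _)).mpr ⟨b, b_mem_behind hwb⟩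
        omega
      -- split counts
      have hsplitP : ∀ P : V → Prop,
          {z ∈ behind G w b | P z}.ncard =
            (if P b then 1 else 0) + ∑ c ∈ K, {z ∈ behind G b c | P z}.ncard := by
        intro P
        rw [hdecomp]
        have : {z ∈ insert b (⋃ c ∈ (K : Set V), behind G b c) | P z}
            = (if P b then {b} else ∅) ∪ {z ∈ ⋃ c ∈ (K : Set V), behind G b c | P z} := by
          ext z
          by_cases hPb : P b <;>
            simp only [hPb, if_true, if_false, Set.mem_sep_iff, Set.mem_insert_iff,
              Set.mem_union, Set.mem_singleton_iff, Set.mem_empty_iff_false, false_or] <;>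
            constructor
          · rintro ⟨rfl | hz, hP⟩
            · exact Or.inl rfl
            · exact Or.inr ⟨hz, hP⟩
          · rintro (rfl | ⟨hz, hP⟩)
            · exact ⟨Or.inl rfl, hPb⟩
            · exact ⟨Or.inr hz, hP⟩
          · rintro ⟨rfl | hz, hP⟩
            · exact absurd hP hPb
            · exact ⟨hz, hP⟩
          · rintro ⟨hz, hP⟩
            exact ⟨Or.inr hz, hP⟩
        rw [this, Set.ncard_union_eq ?_ (Set.toFinite _) (Set.toFinite _),
          ncard_biUnion_sep (H := G) K _ P hdisj]
        · by_cases hPb : P b <;> simp [hPb]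
        · by_cases hPb : P b <;> simp only [hPb, if_true, if_false]
          · rw [Set.disjoint_left]
            intro z hz hzt
            rw [Set.mem_singleton_iff] at hz
            subst hz
            exact hbnot hzt.1
          · exact Set.empty_disjoint _
      have hLs := hsplitP (IsLeaf G)
      have hMs := hsplitP (IsMajor G)
      rw [if_neg hleaf] at hLs
      have hsum : (∑ c ∈ K, {z ∈ behind G b c | IsMajor G z}.ncard) + K.card ≤
          ∑ c ∈ K, {z ∈ behind G b c | IsLeaf G z}.ncard := by
        calc (∑ c ∈ K, {z ∈ behind G b c | IsMajor G z}.ncard) + K.card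
            = ∑ c ∈ K, ({z ∈ behind G b c | IsMajor G z}.ncard + 1) := by
              rw [Finset.sum_add_distrib, Finset.sum_const, smul_eq_mul, mul_one]
          _ ≤ _ := Finset.sum_le_sum hchild
      have hKeq : K.card = (G.neighborSet b).ncard - 1 := by
        have hKd : Kset = G.neighborSet b \ {w} := by
          ext c
          simp only [hKset, Set.mem_setOf_eq, Set.mem_diff, Set.mem_singleton_iff,
            SimpleGraph.mem_neighborSet]
        rw [hK, ← Set.ncard_eq_toFinset_card', hKd]
        exact Set.ncard_diff_singleton_of_mem (show w ∈ G.neighborSet b from hwb.symm)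
      have hnb1 : 1 ≤ (G.neighborSet b).ncard :=
        (Set.ncard_pos (Set.toFinite _)).mpr ⟨w, hwb.symm⟩
      have hnbne : (G.neighborSet b).ncard ≠ 1 := hleaf
      by_cases hmaj : IsMajor G b
      · rw [if_pos hmaj] at hMs
        have h3 : 3 ≤ (G.neighborSet b).ncard := hmaj
        omega
      · rw [if_neg hmaj] at hMs
        have h3 : ¬ (3 ≤ (G.neighborSet b).ncard) := hmaj
        omega

lemma counting_univ (hc : G.Connected) (ha : G.IsAcyclic) {v₀ : V} (hmaj : IsMajor G v₀) :
    {z : V | IsMajor G z}.ncard + 2 ≤ {z : V | IsLeaf G z}.ncard := by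
  classical
  set K : Finset V := Set.toFinset (G.neighborSet v₀) with hK
  have hKmem : ∀ c, c ∈ K ↔ G.Adj v₀ c := by
    intro c; rw [hK, Set.mem_toFinset]; rfl
  have hdecomp : (Set.univ : Set V) = insert v₀ (⋃ c ∈ (K : Set V), behind G v₀ c) := by
    ext z
    simp only [Set.mem_univ, true_iff, Set.mem_insert_iff, Set.mem_iUnion, Finset.mem_coe]
    by_cases hz : z = v₀
    · exact Or.inl hz
    · obtain ⟨c, hac, hd⟩ := exists_closer hc (c := z) (Ne.symm hz)
      refine Or.inr ⟨c, (hKmem c).mpr hac, ?_⟩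
      show G.dist v₀ z = G.dist c z + 1
      have e1 : G.dist z c = G.dist c z := dcomm G _ _
      have e2 : G.dist z v₀ = G.dist v₀ z := dcomm G _ _
      omega
  have hbnot : v₀ ∉ ⋃ c ∈ (K : Set V), behind G v₀ c := by
    simp only [Set.mem_iUnion, Finset.mem_coe, not_exists]
    intro c hcK hmem
    have : G.dist v₀ v₀ = G.dist c v₀ + 1 := hmem
    have e1 : G.dist v₀ v₀ = 0 := SimpleGraph.dist_self
    omega
  have hdisj : ∀ c ∈ K, ∀ c' ∈ K, c ≠ c' → behind G v₀ c ∩ behind G v₀ c' = ∅ :=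
    fun c hcK c' hcK' hne =>
      behind_disjoint hc ha ((hKmem c).mp hcK) ((hKmem c').mp hcK') hne
  have hchild : ∀ c ∈ K, {z ∈ behind G v₀ c | IsMajor G z}.ncard + 1 ≤
      {z ∈ behind G v₀ c | IsLeaf G z}.ncard := by
    intro c hcK
    exact counting hc ha ((behind G v₀ c).ncard) v₀ c ((hKmem c).mp hcK) le_rfl
  have hsplitP : ∀ P : V → Prop,
      {z : V | P z}.ncard =
        (if P v₀ then 1 else 0) + ∑ c ∈ K, {z ∈ behind G v₀ c | P z}.ncard := by
    intro P
    have huniv : {z : V | P z} = {z ∈ (Set.univ : Set V) | P z} := by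
      ext z; simp
    rw [huniv, hdecomp]
    have hsp : {z ∈ insert v₀ (⋃ c ∈ (K : Set V), behind G v₀ c) | P z}
        = (if P v₀ then {v₀} else ∅) ∪ {z ∈ ⋃ c ∈ (K : Set V), behind G v₀ c | P z} := by
      ext z
      by_cases hPb : P v₀ <;>
        simp only [hPb, if_true, if_false, Set.mem_sep_iff, Set.mem_insert_iff,
          Set.mem_union, Set.mem_singleton_iff, Set.mem_empty_iff_false, false_or] <;>
        constructor
      · rintro ⟨rfl | hz, hP⟩
        · exact Or.inl rfl
        · exact Or.inr ⟨hz, hP⟩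
      · rintro (rfl | ⟨hz, hP⟩)
        · exact ⟨Or.inl rfl, hPb⟩
        · exact ⟨Or.inr hz, hP⟩
      · rintro ⟨rfl | hz, hP⟩
        · exact absurd hP hPb
        · exact ⟨hz, hP⟩
      · rintro ⟨hz, hP⟩
        exact ⟨Or.inr hz, hP⟩
    rw [hsp, Set.ncard_union_eq ?_ (Set.toFinite _) (Set.toFinite _),
      ncard_biUnion_sep (H := G) K _ P hdisj]
    · by_cases hPb : P v₀ <;> simp [hPb]
    · by_cases hPb : P v₀ <;> simp only [hPb, if_true, if_false]
      · rw [Set.disjoint_left]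
        intro z hz hzt
        rw [Set.mem_singleton_iff] at hz
        subst hz
        exact hbnot hzt.1
      · exact Set.empty_disjoint _
  have hLs := hsplitP (IsLeaf G)
  have hMs := hsplitP (IsMajor G)
  have hleaf : ¬ IsLeaf G v₀ := by
    unfold IsLeaf
    unfold IsMajor at hmaj
    omega
  rw [if_neg hleaf] at hLs
  rw [if_pos hmaj] at hMs
  have hsum : (∑ c ∈ K, {z ∈ behind G v₀ c | IsMajor G z}.ncard) + K.card ≤
      ∑ c ∈ K, {z ∈ behind G v₀ c | IsLeaf G z}.ncard := by
    calc (∑ c ∈ K, {z ∈ behind G v₀ c | IsMajor G z}.ncard) + K.card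
        = ∑ c ∈ K, ({z ∈ behind G v₀ c | IsMajor G z}.ncard + 1) := by
          rw [Finset.sum_add_distrib, Finset.sum_const, smul_eq_mul, mul_one]
      _ ≤ _ := Finset.sum_le_sum hchild
  have hKcard : 3 ≤ K.card := by
    rw [hK, ← Set.ncard_eq_toFinset_card']
    exact hmaj
  omega

/-! ### Endgame helpers -/

lemma sb_nonmajor (hterm : IsTerminalOf G f x) {z : V}
    (hbtw : G.dist f z + G.dist z x = G.dist f x) (hzx : z ≠ x) : ¬ IsMajor G z := by
  intro hmaj
  have h1 := hterm.2.2 z hmaj hzx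
  omega

lemma interior_not_leaf (hc : G.Connected) {p q z : V}
    (hbtw : G.dist p z + G.dist z q = G.dist p q) (hzp : z ≠ p) (hzq : z ≠ q) :
    ¬ IsLeaf G z := by
  intro hleaf
  obtain ⟨n₁, hn₁, hd₁⟩ := exists_closer hc (c := p) hzp
  obtain ⟨n₂, hn₂, hd₂⟩ := exists_closer hc (c := q) hzq
  have hdn2 : G.dist n₂ q + 1 = G.dist z q := by
    have := dcomm G q n₂; have := dcomm G q z; omega
  have hne : n₁ ≠ n₂ := by
    intro h
    subst h
    have t : G.dist p q ≤ G.dist p n₁ + G.dist n₁ q := hc.dist_triangle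
    have hp1 : 0 < G.dist p z := hc.pos_dist_of_ne (Ne.symm hzp)
    have hq1 : 0 < G.dist z q := hc.pos_dist_of_ne hzq
    omega
  obtain ⟨x, hx⟩ := Set.ncard_eq_one.mp hleaf
  have h1 : n₁ ∈ G.neighborSet z := hn₁
  have h2 : n₂ ∈ G.neighborSet z := hn₂
  rw [hx] at h1 h2
  simp only [Set.mem_singleton_iff] at h1 h2
  exact hne (h1.trans h2.symm)

lemma branch_major [Fintype V] (hc : G.Connected) {a b c' m : V}
    (hb1 : G.dist a m + G.dist m b = G.dist a b)
    (hb2 : G.dist a m + G.dist m c' = G.dist a c')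
    (hb3 : G.dist b m + G.dist m c' = G.dist b c')
    (hma : m ≠ a) (hmb : m ≠ b) (hmc : m ≠ c') : IsMajor G m := by
  obtain ⟨na, hna, hda⟩ := exists_closer hc (c := a) hma
  obtain ⟨nb, hnb, hdb⟩ := exists_closer hc (c := b) hmb
  obtain ⟨nc, hnc, hdc⟩ := exists_closer hc (c := c') hmc
  have hposa : 0 < G.dist a m := hc.pos_dist_of_ne (Ne.symm hma)
  have hposb : 0 < G.dist b m := hc.pos_dist_of_ne (Ne.symm hmb)
  have hposc : 0 < G.dist c' m := hc.pos_dist_of_ne (Ne.symm hmc)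
  have eab : G.dist b m = G.dist m b := dcomm G _ _
  have eac : G.dist c' m = G.dist m c' := dcomm G _ _
  have hab : na ≠ nb := by
    intro h
    subst h
    have t : G.dist a b ≤ G.dist a na + G.dist na b := hc.dist_triangle
    have e1 : G.dist na b = G.dist b na := dcomm G _ _
    omega
  have hac : na ≠ nc := by
    intro h
    subst h
    have t : G.dist a c' ≤ G.dist a na + G.dist na c' := hc.dist_triangle
    have e1 : G.dist na c' = G.dist c' na := dcomm G _ _
    omega
  have hbc : nb ≠ nc := by
    intro h
    subst h
    have t : G.dist b c' ≤ G.dist b nb + G.dist nb c' := hc.dist_triangle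
    have e1 : G.dist nb c' = G.dist c' nb := dcomm G _ _
    have e2 : G.dist b nb = G.dist nb b := dcomm G _ _
    have e3 : G.dist nb b = G.dist b nb := dcomm G _ _
    omega
  show 3 ≤ (G.neighborSet m).ncard
  have hsub : ({na, nb, nc} : Set V) ⊆ G.neighborSet m := by
    intro t ht
    rcases ht with rfl | rfl | rfl
    · exact hna
    · exact hnb
    · exact hnc
  have h3 : ({na, nb, nc} : Set V).ncard = 3 := by
    rw [Set.ncard_insert_of_notMem (by simp [hab, hac]) (Set.toFinite _),
      Set.ncard_insert_of_notMem (by simp [hbc]) (Set.toFinite _), Set.ncard_singleton]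
  calc 3 = ({na, nb, nc} : Set V).ncard := h3.symm
    _ ≤ _ := Set.ncard_le_ncard hsub (Set.toFinite _)

/-- The main geometric contradiction, in the asymmetric case `xg ≠ b`. -/
lemma side_case (hc : G.Connected) (ha : G.IsAcyclic) {w a b f g xf xg : V}
    (hwa : G.Adj w a) (hwb : G.Adj w b) (hab : a ≠ b)
    (hf_term : IsTerminalOf G f xf) (hfS : f ∈ behind G w b) (hxfS : xf ∉ behind G w b)
    (hg_term : IsTerminalOf G g xg) (hgS : g ∈ behind G w a) (hxgS : xg ∉ behind G w a)
    (hxfw : xf ≠ w) (hxgw : xg ≠ w) (hxgb : xg ≠ b) : False := by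
  have hf_leaf := hf_term.1
  have hxf_major := hf_term.2.1
  have hg_leaf := hg_term.1
  have hxg_major := hg_term.2.1
  have hfSb : G.dist w f = G.dist b f + 1 := hfS
  have hgSa : G.dist w g = G.dist a g + 1 := hgS
  obtain ⟨EF1, EF2⟩ := behind_enter hc ha hwb hxfS hfS
  obtain ⟨EG1, EG2⟩ := behind_enter hc ha hwa hxgS hgS
  -- basic comms
  have c1 : G.dist f xf = G.dist xf f := dcomm G _ _
  have c2 : G.dist f b = G.dist b f := dcomm G _ _
  have c3 : G.dist b xf = G.dist xf b := dcomm G _ _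
  have c4 : G.dist f w = G.dist w f := dcomm G _ _
  have c5 : G.dist w xf = G.dist xf w := dcomm G _ _
  have c6 : G.dist g xg = G.dist xg g := dcomm G _ _
  have c7 : G.dist g a = G.dist a g := dcomm G _ _
  have c8 : G.dist a xg = G.dist xg a := dcomm G _ _
  have c9 : G.dist g w = G.dist w g := dcomm G _ _
  have c10 : G.dist w xg = G.dist xg w := dcomm G _ _
  -- w is strictly between f and xf, hence not major
  have btw_fw : G.dist f w + G.dist w xf = G.dist f xf := by omega
  have hw_nonmajor : ¬ IsMajor G w :=
    sb_nonmajor hf_term btw_fw (Ne.symm hxfw)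
  -- neighborSet w = {a, b}
  have hnw : ({a, b} : Set V) = G.neighborSet w := by
    apply Set.eq_of_subset_of_ncard_le
    · intro t ht
      rcases ht with rfl | rfl
      · exact hwa
      · exact hwb
    · have h2 : ({a, b} : Set V).ncard = 2 := Set.ncard_pair hab
      have h3 : ¬ (3 ≤ (G.neighborSet w).ncard) := hw_nonmajor
      omega
    · exact Set.toFinite _
  -- xf ∈ behind G w a
  have hxfSa : G.dist w xf = G.dist a xf + 1 := by
    obtain ⟨y, hwy, hdy⟩ := exists_closer hc (c := xf) (Ne.symm hxfw)
    have hy : y ∈ ({a, b} : Set V) := by rw [hnw]; exact hwy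
    simp only [Set.mem_insert_iff, Set.mem_singleton_iff] at hy
    rcases hy with h | h <;> rw [h] at hdy
    · have := dcomm G a xf; omega
    · omega
  -- xg ∈ behind G w b
  have hxgSb : G.dist w xg = G.dist b xg + 1 := by
    obtain ⟨y, hwy, hdy⟩ := exists_closer hc (c := xg) (Ne.symm hxgw)
    have hy : y ∈ ({a, b} : Set V) := by rw [hnw]; exact hwy
    simp only [Set.mem_insert_iff, Set.mem_singleton_iff] at hy
    rcases hy with h | h <;> rw [h] at hdy
    · omega
    · have := dcomm G b xg; omega
  have c11 : G.dist b xg = G.dist xg b := dcomm G _ _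
  -- xf ≠ xg
  have hxf_ne_xg : xf ≠ xg := by
    intro h
    subst h
    apply hab
    refine closer_unique hc ha (c := xf) (z := w) hwa hwb ?_ ?_
    · have := dcomm G a xf; omega
    · omega
  -- a ∉ behind G w b , b ∉ behind G w a
  have hposab : 0 < G.dist b a := hc.pos_dist_of_ne (Ne.symm hab)
  have hposba : 0 < G.dist a b := hc.pos_dist_of_ne hab
  have hwa1 : G.dist w a = 1 := SimpleGraph.dist_eq_one_iff_adj.mpr hwa
  have hwb1 : G.dist w b = 1 := SimpleGraph.dist_eq_one_iff_adj.mpr hwb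
  have ha_notSb : a ∉ behind G w b := by
    intro hmem
    have : G.dist w a = G.dist b a + 1 := hmem
    omega
  have hb_notSa : b ∉ behind G w a := by
    intro hmem
    have : G.dist w b = G.dist a b + 1 := hmem
    omega
  obtain ⟨EA1, EA2⟩ := behind_enter hc ha hwb ha_notSb hfS
  obtain ⟨EB1, EB2⟩ := behind_enter hc ha hwa hb_notSa hgS
  have c12 : G.dist a w = G.dist w a := dcomm G _ _
  have c13 : G.dist b w = G.dist w b := dcomm G _ _
  have hab2 : G.dist a b = 2 := by omega
  have hba2 : G.dist b a = 2 := by omega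
  -- b ≠ xg given; b is strictly between g and xg, hence not major
  have btw_gb : G.dist g b + G.dist b xg = G.dist g xg := by
    have := dcomm G g b; have := dcomm G b g; omega
  have hb_nonmajor : ¬ IsMajor G b := sb_nonmajor hg_term btw_gb (Ne.symm hxgb)
  -- t : the neighbor of b toward xg
  obtain ⟨t, hbt, hdt⟩ := exists_closer hc (c := xg) (z := b) (Ne.symm hxgb)
  have htw : t ≠ w := by
    intro h
    rw [h] at hdt
    omega
  -- neighborSet b = {w, t}
  have hnb : ({w, t} : Set V) = G.neighborSet b := by
    apply Set.eq_of_subset_of_ncard_le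
    · intro s hs
      rcases hs with rfl | rfl
      · exact hwb.symm
      · exact hbt
    · have h2 : ({w, t} : Set V).ncard = 2 := Set.ncard_pair (Ne.symm htw)
      have h3 : ¬ (3 ≤ (G.neighborSet b).ncard) := hb_nonmajor
      omega
    · exact Set.toFinite _
  have hb_not_leaf : ¬ IsLeaf G b := by
    intro hl
    have : (G.neighborSet b).ncard = 2 := by
      rw [← hnb]; exact Set.ncard_pair (Ne.symm htw)
    unfold IsLeaf at hl
    omega
  have hbf : b ≠ f := fun h => hb_not_leaf (h ▸ hf_leaf)
  -- the neighbor of b toward f is t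
  have hdft : G.dist f t + 1 = G.dist f b := by
    obtain ⟨y, hby, hdy⟩ := exists_closer hc (c := f) (z := b) hbf
    have hy : y ∈ ({w, t} : Set V) := by rw [hnb]; exact hby
    simp only [Set.mem_insert_iff, Set.mem_singleton_iff] at hy
    rcases hy with h | h <;> rw [h] at hdy
    · omega
    · omega
  have hfxg_tri : G.dist f xg ≤ G.dist f t + G.dist t xg := hc.dist_triangle
  have c14 : G.dist t xg = G.dist xg t := dcomm G _ _
  -- median of b, f, xg
  obtain ⟨m, M1, M2, M3⟩ := median hc ha b f xg
  have hm_ne_b : m ≠ b := by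
    intro h
    rw [h] at M3
    omega
  have hf_ne_xg : f ≠ xg := by
    intro h
    have h1 : (3:ℕ) ≤ 1 := by
      unfold IsLeaf at hf_leaf
      unfold IsMajor at hxg_major
      rw [h] at hf_leaf
      omega
    omega
  by_cases hm_f : m = f
  · rw [hm_f] at M2
    exact interior_not_leaf hc M2 (Ne.symm hbf) hf_ne_xg hf_leaf
  by_cases hm_xg : m = xg
  · rw [hm_xg] at M1
    have h1 : G.dist f xg + G.dist xg b = G.dist f b := by
      have := dcomm G xg f; have := dcomm G f xg; omega
    have h2 : G.dist f b + G.dist b xf = G.dist f xf := by omega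
    have h3 := (btw_comp hc h1 h2).1
    exact sb_nonmajor hf_term h3 (Ne.symm hxf_ne_xg) hxg_major
  · have hm_major : IsMajor G m := branch_major hc M1 M2 M3 hm_ne_b hm_f hm_xg
    have h1 : G.dist f m + G.dist m b = G.dist f b := by
      have := dcomm G b m; have := dcomm G m f; omega
    have h2 : G.dist f b + G.dist b xf = G.dist f xf := by omega
    have h3 := (btw_comp hc h1 h2).1
    have hbxf : b ≠ xf := by
      intro h
      rw [← h] at hxfS
      exact hxfS (b_mem_behind hwb)
    have hposbxf : 0 < G.dist b xf := hc.pos_dist_of_ne hbxf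
    have hm_ne_xf : m ≠ xf := by
      intro h
      rw [h] at h1
      omega
    exact (sb_nonmajor hf_term h3 hm_ne_xf) hm_major

lemma endgame (hc : G.Connected) (ha : G.IsAcyclic) {w a b f g xf xg : V}
    (hwa : G.Adj w a) (hwb : G.Adj w b) (hab : a ≠ b)
    (hf_term : IsTerminalOf G f xf) (hfS : f ∈ behind G w b) (hxfS : xf ∉ behind G w b)
    (hg_term : IsTerminalOf G g xg) (hgS : g ∈ behind G w a) (hxgS : xg ∉ behind G w a)
    (hinj : xf = xg → f = g) : False := by
  have hfSb : G.dist w f = G.dist b f + 1 := hfS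
  have hgSa : G.dist w g = G.dist a g + 1 := hgS
  have hfg : f ≠ g := by
    intro h
    rw [h] at hfSb
    apply hab
    refine closer_unique hc ha (c := g) (z := w) hwa hwb ?_ ?_
    · have := dcomm G g a; have := dcomm G g w; have := dcomm G a g; have := dcomm G w g; omega
    · have := dcomm G g b; have := dcomm G g w; have := dcomm G b g; have := dcomm G w g; omega
  -- strict-betweenness of w
  obtain ⟨EF1, EF2⟩ := behind_enter hc ha hwb hxfS hfS
  obtain ⟨EG1, EG2⟩ := behind_enter hc ha hwa hxgS hgS
  have btw_fw : G.dist f w + G.dist w xf = G.dist f xf := by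
    have := dcomm G f xf; have := dcomm G xf f; have := dcomm G f b; have := dcomm G b f
    have := dcomm G f w; have := dcomm G w f; have := dcomm G w xf; have := dcomm G xf w
    have := dcomm G b xf; have := dcomm G xf b
    omega
  have btw_gw : G.dist g w + G.dist w xg = G.dist g xg := by
    have := dcomm G g xg; have := dcomm G xg g; have := dcomm G g a; have := dcomm G a g
    have := dcomm G g w; have := dcomm G w g; have := dcomm G w xg; have := dcomm G xg w
    have := dcomm G a xg; have := dcomm G xg a
    omega
  by_cases hxfw : xf = w
  · by_cases hxgw : xg = w
    · exact hfg (hinj (hxfw.trans hxgw.symm))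
    · have hnm : ¬ IsMajor G w := sb_nonmajor hg_term btw_gw (Ne.symm hxgw)
      rw [hxfw] at hf_term
      exact hnm hf_term.2.1
  · by_cases hxgw : xg = w
    · have hnm : ¬ IsMajor G w := sb_nonmajor hf_term btw_fw (Ne.symm hxfw)
      rw [hxgw] at hg_term
      exact hnm hg_term.2.1
    · by_cases hxgb : xg ≠ b
      · exact side_case hc ha hwa hwb hab hf_term hfS hxfS hg_term hgS hxgS hxfw hxgw hxgb
      · push_neg at hxgb
        by_cases hxfa : xf ≠ a
        · exact side_case hc ha hwb hwa (Ne.symm hab) hg_term hgS hxgS hf_term hfS hxfS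
            hxgw hxfw hxfa
        · push_neg at hxfa
          -- xf = a and xg = b : both a and b are major, contradiction via distances
          have hmaja : IsMajor G a := hxfa ▸ hf_term.2.1
          have haxg : a ≠ xg := by rw [hxgb]; exact hab
          have hlt := hg_term.2.2 a hmaja haxg
          rw [hxgb] at hlt
          -- d g b < d g a, but b is two beyond a from g
          have hb_notSa : b ∉ behind G w a := by
            intro hmem
            have h1 : G.dist w b = G.dist a b + 1 := hmem
            have h2 : G.dist w b = 1 := SimpleGraph.dist_eq_one_iff_adj.mpr hwb
            have h3 : 0 < G.dist a b := hc.pos_dist_of_ne hab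
            omega
          obtain ⟨EB1, EB2⟩ := behind_enter hc ha hwa hb_notSa hgS
          have h2 : G.dist w b = 1 := SimpleGraph.dist_eq_one_iff_adj.mpr hwb
          have := dcomm G b w; have := dcomm G g b; have := dcomm G b g
          have := dcomm G g a; have := dcomm G a g
          omega

lemma all_removed_false (hc : G.Connected) (ha : G.IsAcyclic) {v₀ : V} (hmaj0 : IsMajor G v₀)
    (r : V → V) (hr : ∀ x, IsExteriorMajor G x → IsTerminalOf G (r x) x)
    (hall : ∀ l, IsLeaf G l → ∃ x, IsExteriorMajor G x ∧ r x = l) : False := by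
  classical
  have hcount := counting_univ hc ha hmaj0
  set F : V → V := fun l => if h : ∃ x, IsExteriorMajor G x ∧ r x = l then h.choose else l
    with hF
  have hmap : ∀ l ∈ {z : V | IsLeaf G z}, F l ∈ {z : V | IsMajor G z} := by
    intro l hl
    have hex := hall l hl
    simp only [hF, dif_pos hex]
    exact hex.choose_spec.1.1
  have hinj : Set.InjOn F {z : V | IsLeaf G z} := by
    intro l₁ h₁ l₂ h₂ he
    have hex₁ := hall l₁ h₁
    have hex₂ := hall l₂ h₂
    simp only [hF, dif_pos hex₁, dif_pos hex₂] at he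
    rw [← hex₁.choose_spec.2, ← hex₂.choose_spec.2, he]
  have := Set.ncard_le_ncard_of_injOn F hmap hinj (Set.toFinite _)
  omega

lemma extract (hc : G.Connected) (ha : G.IsAcyclic) {w b : V} (hwb : G.Adj w b)
    (r : V → V) (hr : ∀ x, IsExteriorMajor G x → IsTerminalOf G (r x) x)
    (hrem : ∀ l, IsLeaf G l → l ∈ behind G w b → ∃ x, IsExteriorMajor G x ∧ r x = l) :
    ∃ f x, IsLeaf G f ∧ f ∈ behind G w b ∧ IsExteriorMajor G x ∧ r x = f ∧
      x ∉ behind G w b := by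
  classical
  by_contra hcon
  push_neg at hcon
  have hcnt := counting hc ha ((behind G w b).ncard) w b hwb le_rfl
  set F : V → V := fun l => if h : ∃ x, IsExteriorMajor G x ∧ r x = l then h.choose else l
    with hF
  have hmap : ∀ l ∈ {z ∈ behind G w b | IsLeaf G z},
      F l ∈ {z ∈ behind G w b | IsMajor G z} := by
    rintro l ⟨hlS, hl⟩
    have hex := hrem l hl hlS
    simp only [hF, dif_pos hex]
    refine ⟨?_, hex.choose_spec.1.1⟩
    exact hcon l hex.choose hl hlS hex.choose_spec.1 hex.choose_spec.2
  have hinj : Set.InjOn F {z ∈ behind G w b | IsLeaf G z} := by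
    rintro l₁ ⟨hS₁, h₁⟩ l₂ ⟨hS₂, h₂⟩ he
    have hex₁ := hrem l₁ h₁ hS₁
    have hex₂ := hrem l₂ h₂ hS₂
    simp only [hF, dif_pos hex₁, dif_pos hex₂] at he
    rw [← hex₁.choose_spec.2, ← hex₂.choose_spec.2, he]
  have := Set.ncard_le_ncard_of_injOn F hmap hinj (Set.toFinite _)
  omega

lemma resolving (hc : G.Connected) (ha : G.IsAcyclic) {v₀ : V} (hmaj0 : IsMajor G v₀)
    (r : V → V) (hr : ∀ x, IsExteriorMajor G x → IsTerminalOf G (r x) x) :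
    IsResolvingSet G ({z : V | IsLeaf G z} \ (r '' {z : V | IsExteriorMajor G z})) := by
  classical
  intro u v hW
  by_contra hne
  have hremoved : ∀ l, IsLeaf G l →
      (G.dist u l ≠ G.dist v l) → ∃ x, IsExteriorMajor G x ∧ r x = l := by
    intro l hl hd
    by_cases hmem : l ∈ {z : V | IsLeaf G z} \ (r '' {z : V | IsExteriorMajor G z})
    · exact absurd (hW l hmem) hd
    · rw [Set.mem_diff] at hmem
      push_neg at hmem
      obtain ⟨x, hx, hrx⟩ := hmem hl
      exact ⟨x, hx, hrx⟩
  by_cases hkept : ∃ l, IsLeaf G l ∧ G.dist u l = G.dist v l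
  swap
  · push_neg at hkept
    exact all_removed_false hc ha hmaj0 r hr
      (fun l hl => hremoved l hl (hkept l hl))
  obtain ⟨l₀, hl₀, hld₀⟩ := hkept
  obtain ⟨p, hp, hpl⟩ := hc.exists_path_of_dist u v
  set D := p.length with hD
  have hDpos : 0 < D := by
    rw [hpl]
    exact hc.pos_dist_of_ne hne
  have pstep : ∀ (c : V), ∀ i < D, G.dist c (p.getVert (i+1)) = G.dist c (p.getVert i) + 1 ∨
      G.dist c (p.getVert i) = G.dist c (p.getVert (i+1)) + 1 :=
    fun c i hi => adj_dist_cases hc ha (p.adj_getVert_succ hi) c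
  have pnomax : ∀ (c : V), ∀ i, 0 < i → i < D →
      ¬(G.dist c (p.getVert i) = G.dist c (p.getVert (i-1)) + 1 ∧
        G.dist c (p.getVert i) = G.dist c (p.getVert (i+1)) + 1) := by
    rintro c i hi0 hiD ⟨h1, h2⟩
    have hadj1 : G.Adj (p.getVert i) (p.getVert (i-1)) := by
      have := p.adj_getVert_succ (i := i-1) (by omega)
      rw [show i - 1 + 1 = i by omega] at this
      exact this.symm
    have hadj2 : G.Adj (p.getVert i) (p.getVert (i+1)) := p.adj_getVert_succ (by omega)
    have heq := closer_unique hc ha hadj1 hadj2 h1.symm h2.symm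
    have e1 := (geo_getVert hc p hpl (i-1) (by omega)).1
    have e2 := (geo_getVert hc p hpl (i+1) (by omega)).1
    rw [heq] at e1
    omega
  -- parity: D is even
  have hDeven : D % 2 = 0 := by
    have hpar := step_parity (h := fun i => G.dist l₀ (p.getVert i)) (D := D) (pstep l₀) D le_rfl
    have h0 : p.getVert 0 = u := Walk.getVert_zero p
    have hDv : p.getVert D = v := Walk.getVert_length p
    rw [h0, hDv] at hpar
    have e1 : G.dist l₀ u = G.dist u l₀ := dcomm G _ _
    have e2 : G.dist l₀ v = G.dist v l₀ := dcomm G _ _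
    omega
  set m := D / 2 with hm
  have hm1 : 1 ≤ m ∧ m + 1 ≤ D := by omega
  set va := p.getVert (m-1) with hva
  set vw := p.getVert m with hvw
  set vb := p.getVert (m+1) with hvb
  have hwa : G.Adj vw va := by
    have := p.adj_getVert_succ (i := m-1) (by omega)
    rw [show m - 1 + 1 = m by omega] at this
    exact this.symm
  have hwb : G.Adj vw vb := p.adj_getVert_succ (by omega)
  have hab : va ≠ vb := by
    intro h
    have e1 := (geo_getVert hc p hpl (m-1) (by omega)).1
    have e2 := (geo_getVert hc p hpl (m+1) (by omega)).1
    rw [hva, hvb] at h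
    rw [h] at e1
    omega
  -- every kept leaf is equidistant structure around the midpoint
  have key : ∀ l, IsLeaf G l → G.dist u l = G.dist v l →
      G.dist va l = G.dist vw l + 1 ∧ G.dist vb l = G.dist vw l + 1 := by
    intro l hl hdl
    obtain ⟨i₀, hi₀D, hbef, haft⟩ := valley (h := fun i => G.dist l (p.getVert i)) (D := D) (pstep l) (pnomax l)
    have h0 : p.getVert 0 = u := Walk.getVert_zero p
    have hDv : p.getVert D = v := Walk.getVert_length p
    have hb0 := hbef 0 (by omega)
    have haD := haft D le_rfl hi₀D
    rw [h0] at hb0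
    rw [hDv] at haD
    have e1 : G.dist l u = G.dist u l := dcomm G _ _
    have e2 : G.dist l v = G.dist v l := dcomm G _ _
    have hi₀m : i₀ = m := by omega
    subst hi₀m
    have hA := hbef (m-1) (by omega)
    have hB := haft (m+1) (by omega) (by omega)
    have e3 : G.dist l va = G.dist va l := dcomm G _ _
    have e4 : G.dist l vb = G.dist vb l := dcomm G _ _
    have e5 : G.dist l vw = G.dist vw l := dcomm G _ _
    rw [← hva, ← hvw] at hA
    rw [← hvb, ← hvw] at hB
    constructor
    · omega
    · omega
  -- all leaves behind vb or va (w.r.t. vw) are removed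
  have hremB : ∀ l, IsLeaf G l → l ∈ behind G vw vb →
      ∃ x, IsExteriorMajor G x ∧ r x = l := by
    intro l hl hlS
    apply hremoved l hl
    intro hdl
    have hk := (key l hl hdl).2
    have hS : G.dist vw l = G.dist vb l + 1 := hlS
    omega
  have hremA : ∀ l, IsLeaf G l → l ∈ behind G vw va →
      ∃ x, IsExteriorMajor G x ∧ r x = l := by
    intro l hl hlS
    apply hremoved l hl
    intro hdl
    have hk := (key l hl hdl).1
    have hS : G.dist vw l = G.dist va l + 1 := hlS
    omega
  obtain ⟨f, xf, hfleaf, hfS, hxfEM, hrxf, hxfS⟩ := extract hc ha hwb r hr hremB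
  obtain ⟨g, xg, hgleaf, hgS, hxgEM, hrxg, hxgS⟩ := extract hc ha hwa r hr hremA
  have hf_term : IsTerminalOf G f xf := hrxf ▸ hr xf hxfEM
  have hg_term : IsTerminalOf G g xg := hrxg ▸ hr xg hxgEM
  exact endgame hc ha hwa hwb hab hf_term hfS hxfS hg_term hgS hxgS
    (fun h => by rw [← hrxf, ← hrxg, h])

lemma partitionDim_le_of_resolving (hc : G.Connected) {S : Set V}
    (hres : IsResolvingSet G S) {v₀ : V} (hv₀ : v₀ ∉ S) :
    partitionDim G ≤ S.ncard + 1 := by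
  classical
  set k := S.ncard with hk
  set T : Finset V := S.toFinset with hTdef
  have hcard : Fintype.card T = k := by
    rw [Fintype.card_coe, hk, Set.ncard_eq_toFinset_card']
  set e : T ≃ Fin k := (Fintype.equivFin T).trans (finCongr hcard) with he
  set c : V → Fin (k+1) := fun z =>
    if hz : z ∈ S then (e ⟨z, Set.mem_toFinset.mpr hz⟩).castSucc else Fin.last k with hcdef
  have hclass : ∀ s (hs : s ∈ S), {x | c x = c s} = {s} := by
    intro s hs
    ext x
    simp only [Set.mem_setOf_eq, Set.mem_singleton_iff]
    constructor
    · intro hx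
      by_cases hxS : x ∈ S
      · simp only [hcdef, dif_pos hxS, dif_pos hs] at hx
        have := Fin.castSucc_injective _ hx
        have := e.injective this
        exact Subtype.ext_iff.mp this
      · simp only [hcdef, dif_neg hxS, dif_pos hs] at hx
        exact absurd hx.symm (Fin.castSucc_lt_last _).ne
    · rintro rfl; rfl
  have hsingle : ∀ (z s : V), distSet G z {s} = G.dist z s := by
    intro z s
    unfold distSet
    rw [Set.image_singleton, csInf_singleton]
  refine Nat.sInf_le ⟨c, ?_, ?_⟩
  · -- surjective
    intro i
    by_cases hi : i = Fin.last k
    · exact ⟨v₀, by simp only [hcdef, dif_neg hv₀, hi]⟩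
    · obtain ⟨j, hj⟩ := Fin.exists_castSucc_eq.mpr hi
      refine ⟨(e.symm j).1, ?_⟩
      have hmem : ((e.symm j).1 : V) ∈ S := Set.mem_toFinset.mp (e.symm j).2
      simp only [hcdef, dif_pos hmem]
      rw [show (⟨(e.symm j).1, Set.mem_toFinset.mpr hmem⟩ : T) = e.symm j from
        Subtype.ext rfl, e.apply_symm_apply, hj]
  · -- resolving
    intro u' v' hrep
    apply hres u' v'
    intro s hs
    have := hrep (c s)
    rw [hclass s hs, hsingle, hsingle] at this
    exact this

end TreeAux

/-- For a tree that is not a path, `pd(T) ≤ n₁(T) - ex(T) + 1`. -/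
theorem partitionDim_tree_le {V : Type*} [Fintype V] (G : SimpleGraph V)
    (hT : G.IsTree) (hnp : ¬ IsPathGraph G) :
    partitionDim G ≤ numLeaves G - numExteriorMajor G + 1 := by
  classical
  obtain ⟨hc, ha⟩ := hT
  have hex : ∃ v₀, IsMajor G v₀ := by
    by_contra h
    push_neg at h
    refine hnp ⟨⟨hc, ha⟩, fun v => ?_⟩
    have := h v
    unfold IsMajor at this
    omega
  obtain ⟨v₀, hmaj0⟩ := hex
  have hrex : ∀ x : V, IsExteriorMajor G x → ∃ l, IsTerminalOf G l x := by
    intro x hx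
    have hpos : 0 < {u | IsTerminalOf G u x}.ncard := hx.2
    obtain ⟨l, hl⟩ := Set.nonempty_of_ncard_ne_zero (Nat.pos_iff_ne_zero.mp hpos)
    exact ⟨l, hl⟩
  choose r' hr' using hrex
  set r : V → V := fun x => if hx : IsExteriorMajor G x then r' x hx else x with hrdef
  have hr : ∀ x, IsExteriorMajor G x → IsTerminalOf G (r x) x := by
    intro x hx
    simp only [hrdef, dif_pos hx]
    exact hr' x hx
  set EM : Set V := {z | IsExteriorMajor G z} with hEM
  set W : Set V := {z | IsLeaf G z} \ (r '' EM) with hW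
  have hres : IsResolvingSet G W := TreeAux.resolving hc ha hmaj0 r hr
  have hv₀W : v₀ ∉ W := by
    intro hmem
    have hleaf : IsLeaf G v₀ := hmem.1
    unfold IsLeaf at hleaf
    unfold IsMajor at hmaj0
    omega
  have hpd := TreeAux.partitionDim_le_of_resolving hc hres hv₀W
  have hRsub : r '' EM ⊆ {z | IsLeaf G z} := by
    rintro l ⟨x, hx, rfl⟩
    exact (hr x hx).1
  have hRcard : (r '' EM).ncard = EM.ncard := by
    apply Set.ncard_image_of_injOn
    intro x₁ h₁ x₂ h₂ heq
    by_contra hne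
    have ht₁ := hr x₁ h₁
    have ht₂ := hr x₂ h₂
    have l₁ := ht₁.2.2 x₂ ht₂.2.1 (Ne.symm hne)
    have l₂ := ht₂.2.2 x₁ ht₁.2.1 hne
    rw [heq] at l₁
    omega
  have hWcard : W.ncard = numLeaves G - numExteriorMajor G := by
    rw [hW, Set.ncard_diff hRsub (Set.toFinite _), hRcard]
    rfl
  rw [hWcard] at hpd
  exact hpd
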